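/- Let (φ, ψ) be an n×n matrix factorization of f ∈ K[[x]] and (φ', ψ') an m×m matrix factorization of g ∈ K[[y]]. Then the pair of 2nm×2nm block matrices ( [[φ⊗I_m, I_n⊗φ'], [-I_n⊗ψ', ψ⊗I_m]], [[ψ⊗I_m, -I_n⊗φ'], [I_n⊗ψ', φ⊗I_m]] ) is a matrix factorization of f + g over K[[x,y]], provided the blocks φ⊗I_m and I_n⊗φ' (and similarly for ψ, ψ') commute appropriately, which holds since they act on different tensor factors. -/
import Mathlib


open Matrix Kronecker

/-- Yoshino's tensor product: if `(φ, ψ)` is a matrix factorization of `f` and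
`(φ', ψ')` one of `g` (viewed over `K[[x,y]]`), then the displayed pair of
`2nm×2nm` block matrices is a matrix factorization of `f + g`. -/
theorem yoshino_tensor_is_matrix_factorization
    {K : Type*} [Field K] {σ τ : Type*} {n m : ℕ}
    (f g : MvPowerSeries (σ ⊕ τ) K)
    (φ ψ : Matrix (Fin n) (Fin n) (MvPowerSeries (σ ⊕ τ) K))
    (φ' ψ' : Matrix (Fin m) (Fin m) (MvPowerSeries (σ ⊕ τ) K))
    (h1 : φ * ψ = f • 1) (h2 : ψ * φ = f • 1)
    (h3 : φ' * ψ' = g • 1) (h4 : ψ' * φ' = g • 1) :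
    fromBlocks (φ ⊗ₖ 1) (1 ⊗ₖ φ') (-(1 ⊗ₖ ψ')) (ψ ⊗ₖ 1) *
        fromBlocks (ψ ⊗ₖ 1) (-(1 ⊗ₖ φ')) (1 ⊗ₖ ψ') (φ ⊗ₖ 1) = (f + g) • 1 ∧
    fromBlocks (ψ ⊗ₖ 1) (-(1 ⊗ₖ φ')) (1 ⊗ₖ ψ') (φ ⊗ₖ 1) *
        fromBlocks (φ ⊗ₖ 1) (1 ⊗ₖ φ') (-(1 ⊗ₖ ψ')) (ψ ⊗ₖ 1) = (f + g) • 1 := by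

  constructor <;>
  · rw [Matrix.fromBlocks_multiply]
    simp only [← Matrix.mul_kronecker_mul, Matrix.mul_one, Matrix.one_mul,
      Matrix.mul_neg, Matrix.neg_mul, neg_neg, h1, h2, h3, h4,
      Matrix.smul_kronecker, Matrix.kronecker_smul, Matrix.one_kronecker_one,
      neg_add_cancel, add_neg_cancel]
    rw [add_smul, ← Matrix.fromBlocks_one, Matrix.fromBlocks_smul,
      Matrix.fromBlocks_smul, Matrix.fromBlocks_add]
    simp [add_comm]
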